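/- Let D, T_s, T_m > 0 satisfy 4 T_s/T_m > 1 and D·T_s/T_m > 1, let α = (T_m/T_s)²(4 T_s/T_m − 1)(D·T_s/T_m − 1), and let k ∈ ℝ satisfy 1 − T_m/T_s − √α < k < 1 − T_m/T_s + √α. Then the symmetric 3×3 matrix W with rows (−D, −k/2 − 1/2, −k/2 + 1/2), (−k/2 − 1/2, −T_s/T_m, −1/2), (−k/2 + 1/2, −1/2, −1) is negative definite. -/

import Mathlib

open Matrix

set_option maxHeartbeats 1000000 in
/-- Negative definiteness of the dissipation matrix `W` for the generator
interconnected with the second-order turbine-governor, under the conditions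
on the droop constant `k = K⁻¹`. -/
theorem dissipation_matrix_negdef (D Ts Tm : ℝ)
    (hD : 0 < D) (hTs : 0 < Ts) (hTm : 0 < Tm)
    (h1 : 1 < 4 * Ts / Tm) (h2 : 1 < D * Ts / Tm)
    (α : ℝ) (hα : α = (Tm/Ts)^2 * (4 * Ts / Tm - 1) * (D * Ts / Tm - 1))
    (k : ℝ) (hk1 : 1 - Tm/Ts - Real.sqrt α < k)
    (hk2 : k < 1 - Tm/Ts + Real.sqrt α) :
    ∀ v : Fin 3 → ℝ, v ≠ 0 →
      v ⬝ᵥ ((!![-D,          -(k/2) - 1/2, -(k/2) + 1/2;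
                -(k/2) - 1/2, -(Ts/Tm),    -(1/2);
                -(k/2) + 1/2, -(1/2),      -1] : Matrix (Fin 3) (Fin 3) ℝ)
        *ᵥ v) < 0 := by
  set t := Ts / Tm with ht_def
  have ht : 0 < t := div_pos hTs hTm
  have htinv : Tm / Ts = 1 / t := by
    rw [ht_def]; field_simp
  have e1' : 4 * Ts / Tm = 4 * t := by rw [ht_def]; ring
  have e2' : D * Ts / Tm = D * t := by rw [ht_def]; ring
  have h1' : 1 < 4 * t := e1' ▸ h1
  have h2' : 1 < D * t := e2' ▸ h2
  have hαval : α = (1/t)^2 * (4 * t - 1) * (D * t - 1) := by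
    rw [hα, htinv, e1', e2']
  have hαpos : 0 ≤ α := by
    rw [hαval]
    have hp : (0:ℝ) < (1/t)^2 := by positivity
    have := mul_pos (mul_pos hp (by linarith : (0:ℝ) < 4*t - 1))
      (by linarith : (0:ℝ) < D*t - 1)
    linarith
  have hsq : (k - (1 - Tm/Ts))^2 < α := by
    have h := sq_lt_sq' (by linarith : -Real.sqrt α < k - (1 - Tm/Ts))
      (by linarith : k - (1 - Tm/Ts) < Real.sqrt α)
    rwa [Real.sq_sqrt hαpos] at h
  rw [htinv] at hsq
  -- key inequality
  have key : t * (k - 1)^2 + 2 * k + 2 < 4 * D * t - D := by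
    rw [hαval] at hsq
    have ht2 : (0:ℝ) < t^2 := by positivity
    have h' := (mul_lt_mul_iff_of_pos_right ht2).2 hsq
    have hne : t ≠ 0 := ne_of_gt ht
    have e1 : (k - (1 - 1/t))^2 * t^2 = (t * (k - 1) + 1)^2 := by
      field_simp
      ring
    have e2 : (1/t)^2 * (4 * t - 1) * (D * t - 1) * t^2 = (4*t - 1) * (D*t - 1) := by
      field_simp
    rw [e1, e2] at h'
    nlinarith [h', ht]
  intro v hv
  have hx : ∃ i, v i ≠ 0 := Function.ne_iff.1 hv
  set x := v 0 with hxd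
  set y := v 1 with hyd
  set z := v 2 with hzd
  have hQ : v ⬝ᵥ ((!![-D,          -(k/2) - 1/2, -(k/2) + 1/2;
                -(k/2) - 1/2, -(Ts/Tm),    -(1/2);
                -(k/2) + 1/2, -(1/2),      -1] : Matrix (Fin 3) (Fin 3) ℝ)
        *ᵥ v) = -(D * x^2 + (k+1)*x*y + (k-1)*x*z + t * y^2 + y*z + z^2) := by
    simp [Matrix.mulVec, dotProduct, Fin.sum_univ_three, ht_def]
    ring
  rw [hQ]
  have hC : (0:ℝ) < t - 1/4 := by linarith
  have hδ : (0:ℝ) < 4*D*t - D - t*(k-1)^2 - 2*k - 2 := by linarith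
  set Q := D * x^2 + (k+1)*x*y + (k-1)*x*z + t * y^2 + y*z + z^2 with hQdef
  -- sum-of-squares identity
  have ident : 16*(t-1/4)*Q
      = 4*(t-1/4)*(2*z+(k-1)*x+y)^2
        + 4*(2*(t-1/4)*y+((k+3)/2)*x)^2
        + 4*(4*D*t - D - t*(k-1)^2 - 2*k - 2)*x^2 := by
    rw [hQdef]; ring
  have hA1 : 0 ≤ 4*(t-1/4)*(2*z+(k-1)*x+y)^2 :=
    mul_nonneg (by linarith) (sq_nonneg _)
  have hA2 : 0 ≤ 4*(2*(t-1/4)*y+((k+3)/2)*x)^2 :=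
    mul_nonneg (by norm_num) (sq_nonneg _)
  have hA3 : 0 ≤ 4*(4*D*t - D - t*(k-1)^2 - 2*k - 2)*x^2 :=
    mul_nonneg (by linarith) (sq_nonneg _)
  have hQpos : 0 < 16*(t-1/4)*Q := by
    rcases hx with ⟨i, hi⟩
    fin_cases i
    · -- x ≠ 0
      have hx2 : 0 < x^2 := by positivity
      have := mul_pos (by linarith : (0:ℝ) < 4*(4*D*t - D - t*(k-1)^2 - 2*k - 2)) hx2
      linarith [ident, hA1, hA2]
    · -- y ≠ 0
      by_cases hx0 : x = 0
      · have hw : 2*(t-1/4)*y+((k+3)/2)*x ≠ 0 := by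
          rw [hx0]
          have : 2*(t-1/4)*y ≠ 0 := mul_ne_zero (by positivity) hi
          simpa using this
        have hw2 : 0 < (2*(t-1/4)*y+((k+3)/2)*x)^2 :=
          (sq_nonneg _).lt_of_ne (Ne.symm (pow_ne_zero 2 hw))
        have := mul_pos (by norm_num : (0:ℝ) < 4) hw2
        linarith [ident, hA1, hA3]
      · have hx2 : 0 < x^2 := by positivity
        have := mul_pos (by linarith : (0:ℝ) < 4*(4*D*t - D - t*(k-1)^2 - 2*k - 2)) hx2
        linarith [ident, hA1, hA2]
    · -- z ≠ 0
      by_cases hx0 : x = 0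
      · by_cases hy0 : y = 0
        · have hw : 2*z+(k-1)*x+y ≠ 0 := by
            rw [hx0, hy0]
            simpa using hi
          have hw2 : 0 < (2*z+(k-1)*x+y)^2 :=
            (sq_nonneg _).lt_of_ne (Ne.symm (pow_ne_zero 2 hw))
          have := mul_pos (by linarith : (0:ℝ) < 4*(t-1/4)) hw2
          linarith [ident, hA2, hA3]
        · have hw : 2*(t-1/4)*y+((k+3)/2)*x ≠ 0 := by
            rw [hx0]
            have : 2*(t-1/4)*y ≠ 0 := mul_ne_zero (by positivity) hy0
            simpa using this
          have hw2 : 0 < (2*(t-1/4)*y+((k+3)/2)*x)^2 :=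
            (sq_nonneg _).lt_of_ne (Ne.symm (pow_ne_zero 2 hw))
          have := mul_pos (by norm_num : (0:ℝ) < 4) hw2
          linarith [ident, hA1, hA3]
      · have hx2 : 0 < x^2 := by positivity
        have := mul_pos (by linarith : (0:ℝ) < 4*(4*D*t - D - t*(k-1)^2 - 2*k - 2)) hx2
        linarith [ident, hA1, hA2]
  have hQ' : 0 < Q := by nlinarith [hQpos, hC]
  linarith
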